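/- Coordinate-wise trimmed mean satisfies, in each single dimension d, |[TriMean({y_w})]_d − [ȳ]_d| ≤ (3δ/(1−2δ)) · max_{w∈R} |[y_w]_d − [ȳ]_d|, where ȳ is the average of the regular messages, δ = 1 − R/W < 1/2, and in dimension d the W−R smallest and W−R largest values are removed before averaging. -/

import Mathlib

/-- Scalar trimmed mean: sort the `W` values, discard the `W − R` smallest and the `W − R`
largest, and average the remaining `2R − W` values. -/
noncomputable def triMean1 (W R : ℕ) (y : Fin W → ℝ) : ℝ :=
  ((2 * R - W : ℕ) : ℝ)⁻¹ *
    ∑ i ∈ Finset.univ.filter (fun i : Fin W => W - R ≤ (i : ℕ) ∧ (i : ℕ) < R),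
      y (Tuple.sort y i)

/-- in a single dimension, the trimmed mean satisfies
`|TriMean(y) − ybar| ≤ (3δ/(1−2δ)) · max_{w ∈ Reg} |y w − ybar|`, with `δ = 1 − R/W < 1/2`
and `ybar` the average of the regular messages. -/
theorem stmt_9 (W R : ℕ) (hRW : R ≤ W) (h2 : W < 2 * R)
    (Reg : Finset (Fin W)) (hReg : Reg.Nonempty) (hcard : Reg.card = R)
    (y : Fin W → ℝ) :
    |triMean1 W R y - (R : ℝ)⁻¹ * ∑ w ∈ Reg, y w| ≤
      3 * (1 - (R : ℝ) / W) / (1 - 2 * (1 - (R : ℝ) / W)) *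
        Reg.sup' hReg (fun w => |y w - (R : ℝ)⁻¹ * ∑ v ∈ Reg, y v|) := by
  classical
  have hW0 : 0 < W := by omega
  have hR0 : 0 < R := by omega
  set σ := Tuple.sort y with hσ
  set ybar := (R : ℝ)⁻¹ * ∑ w ∈ Reg, y w with hybar
  set M := Reg.sup' hReg (fun w => |y w - ybar|) with hM
  set F := Finset.univ.filter (fun i : Fin W => W - R ≤ (i : ℕ) ∧ (i : ℕ) < R) with hF
  have hcompl : (Regᶜ : Finset (Fin W)).card = W - R := by
    rw [Finset.card_compl, hcard, Fintype.card_fin]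
  have hMbound : ∀ w ∈ Reg, |y w - ybar| ≤ M := fun w hw => Finset.le_sup' (fun w => |y w - ybar|) hw
  have hM0 : 0 ≤ M := by
    obtain ⟨w, hw⟩ := hReg
    exact le_trans (abs_nonneg _) (hMbound w hw)
  -- each kept sorted value is ≥ some regular value
  have hlow : ∀ i : Fin W, W - R ≤ (i : ℕ) → ∃ w ∈ Reg, y w ≤ y (σ i) := by
    intro i hi
    by_contra h
    push_neg at h
    have hsub : (Finset.Iic i).image σ ⊆ Regᶜ := by
      intro j hj
      obtain ⟨k, hk, rfl⟩ := Finset.mem_image.mp hj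
      rw [Finset.mem_compl]
      intro hmem
      exact absurd (Tuple.monotone_sort y (Finset.mem_Iic.mp hk))
        (not_le.mpr (h _ hmem))
    have hc := Finset.card_le_card hsub
    rw [Finset.card_image_of_injective _ σ.injective, Fin.card_Iic, hcompl] at hc
    omega
  -- each kept sorted value is ≤ some regular value
  have hupp : ∀ i : Fin W, (i : ℕ) < R → ∃ w ∈ Reg, y (σ i) ≤ y w := by
    intro i hi
    by_contra h
    push_neg at h
    have hsub : (Finset.Ici i).image σ ⊆ Regᶜ := by
      intro j hj
      obtain ⟨k, hk, rfl⟩ := Finset.mem_image.mp hj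
      rw [Finset.mem_compl]
      intro hmem
      exact absurd (Tuple.monotone_sort y (Finset.mem_Ici.mp hk))
        (not_le.mpr (h _ hmem))
    have hc := Finset.card_le_card hsub
    rw [Finset.card_image_of_injective _ σ.injective, Fin.card_Ici, hcompl] at hc
    have := i.isLt
    omega
  have hkey : ∀ i : Fin W, W - R ≤ (i : ℕ) → (i : ℕ) < R → |y (σ i) - ybar| ≤ M := by
    intro i h1 h2'
    obtain ⟨a, ha, hya⟩ := hlow i h1
    obtain ⟨b, hb, hyb⟩ := hupp i h2'
    have h1' := abs_le.mp (hMbound a ha)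
    have h2'' := abs_le.mp (hMbound b hb)
    rw [abs_le]
    constructor <;> linarith [h1'.1, h1'.2, h2''.1, h2''.2]
  -- the kept (original) index set
  set K := F.image σ with hK
  have himg : F.image Fin.val = Finset.Ico (W - R) R := by
    ext m
    simp only [hF, Finset.mem_image, Finset.mem_filter, Finset.mem_univ, true_and,
      Finset.mem_Ico]
    constructor
    · rintro ⟨i, ⟨ha, hb⟩, rfl⟩; exact ⟨ha, hb⟩
    · rintro ⟨ha, hb⟩; exact ⟨⟨m, lt_of_lt_of_le hb hRW⟩, ⟨ha, hb⟩, rfl⟩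
  have hFcard : F.card = 2 * R - W := by
    rw [← Finset.card_image_of_injective F Fin.val_injective, himg, Nat.card_Ico]
    omega
  have hKcard : K.card = 2 * R - W := by
    rw [hK, Finset.card_image_of_injective _ σ.injective, hFcard]
  have hbK : ∀ j ∈ K, |y j - ybar| ≤ M := by
    intro j hj
    obtain ⟨i, hi, rfl⟩ := Finset.mem_image.mp hj
    rw [hF, Finset.mem_filter] at hi
    exact hkey i hi.2.1 hi.2.2
  -- sum over K of deviations
  have hzero : ∑ j ∈ Reg, (y j - ybar) = 0 := by
    rw [Finset.sum_sub_distrib, Finset.sum_const, hcard, hybar, nsmul_eq_mul]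
    have : (R : ℝ) ≠ 0 := Nat.cast_ne_zero.mpr hR0.ne'
    field_simp
    ring
  have hsplitK : ∑ j ∈ K, (y j - ybar)
      = ∑ j ∈ K ∩ Reg, (y j - ybar) + ∑ j ∈ K \ Reg, (y j - ybar) :=
    (Finset.sum_inter_add_sum_sdiff K Reg _).symm
  have hsplitR : (0 : ℝ)
      = ∑ j ∈ Reg ∩ K, (y j - ybar) + ∑ j ∈ Reg \ K, (y j - ybar) := by
    rw [← hzero]; exact (Finset.sum_inter_add_sum_sdiff Reg K _).symm
  rw [Finset.inter_comm] at hsplitR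
  have hdecomp : ∑ j ∈ K, (y j - ybar)
      = ∑ j ∈ K \ Reg, (y j - ybar) - ∑ j ∈ Reg \ K, (y j - ybar) := by
    have : ∑ j ∈ K ∩ Reg, (y j - ybar) = - ∑ j ∈ Reg \ K, (y j - ybar) := by linarith
    rw [hsplitK, this]; ring
  -- cardinality bounds
  have e1 : (K \ Reg).card + (K ∩ Reg).card = 2 * R - W := by
    rw [Finset.card_sdiff_add_card_inter, hKcard]
  have e2 : (Reg \ K).card + (Reg ∩ K).card = R := by
    rw [Finset.card_sdiff_add_card_inter, hcard]
  have e3 : (Reg ∩ K).card = (K ∩ Reg).card := by rw [Finset.inter_comm]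
  have e4 : (K \ Reg).card ≤ W - R := by
    rw [← hcompl]
    exact Finset.card_le_card (fun j hj => Finset.mem_compl.mpr (Finset.mem_sdiff.mp hj).2)
  have ecard : (K \ Reg).card + (Reg \ K).card ≤ 3 * (W - R) := by omega
  -- bound the sum
  have hsum1 : |∑ j ∈ K \ Reg, (y j - ybar)| ≤ ((K \ Reg).card : ℝ) * M := by
    refine le_trans (Finset.abs_sum_le_sum_abs _ _) ?_
    rw [← nsmul_eq_mul]
    exact Finset.sum_le_card_nsmul _ _ _
      (fun j hj => hbK j (Finset.mem_sdiff.mp hj).1)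
  have hsum2 : |∑ j ∈ Reg \ K, (y j - ybar)| ≤ ((Reg \ K).card : ℝ) * M := by
    refine le_trans (Finset.abs_sum_le_sum_abs _ _) ?_
    rw [← nsmul_eq_mul]
    exact Finset.sum_le_card_nsmul _ _ _
      (fun j hj => hMbound j (Finset.mem_sdiff.mp hj).1)
  have hsumK : |∑ j ∈ K, (y j - ybar)| ≤ 3 * ((W : ℝ) - R) * M := by
    rw [hdecomp]
    have h3 : ((K \ Reg).card : ℝ) + ((Reg \ K).card : ℝ) ≤ 3 * ((W : ℝ) - R) := by
      have := ecard
      have hWR : (((W - R : ℕ)) : ℝ) = (W : ℝ) - R := by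
        rw [Nat.cast_sub hRW]
      calc ((K \ Reg).card : ℝ) + ((Reg \ K).card : ℝ)
          = (((K \ Reg).card + (Reg \ K).card : ℕ) : ℝ) := by push_cast; ring
        _ ≤ ((3 * (W - R) : ℕ) : ℝ) := by exact_mod_cast this
        _ = 3 * ((W : ℝ) - R) := by push_cast [Nat.cast_sub hRW]; ring
    calc |∑ j ∈ K \ Reg, (y j - ybar) - ∑ j ∈ Reg \ K, (y j - ybar)|
        ≤ |∑ j ∈ K \ Reg, (y j - ybar)| + |∑ j ∈ Reg \ K, (y j - ybar)| := abs_sub _ _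
      _ ≤ ((K \ Reg).card : ℝ) * M + ((Reg \ K).card : ℝ) * M := add_le_add hsum1 hsum2
      _ = (((K \ Reg).card : ℝ) + ((Reg \ K).card : ℝ)) * M := by ring
      _ ≤ 3 * ((W : ℝ) - R) * M := mul_le_mul_of_nonneg_right h3 hM0
  -- express triMean1 − ybar
  have hc : ((2 * R - W : ℕ) : ℝ) = 2 * (R : ℝ) - W := by
    rw [Nat.cast_sub (le_of_lt h2)]; push_cast; ring
  have hcpos : (0 : ℝ) < 2 * (R : ℝ) - W := by
    have : (W : ℝ) < 2 * R := by exact_mod_cast h2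
    linarith
  have hsumF : ∑ i ∈ F, y (σ i) = ∑ j ∈ K, y j :=
    (Finset.sum_image (fun a _ b _ h => σ.injective h)).symm
  have hKsum : ∑ j ∈ K, y j = ∑ j ∈ K, (y j - ybar) + (2 * (R : ℝ) - W) * ybar := by
    rw [Finset.sum_sub_distrib, Finset.sum_const, hKcard, nsmul_eq_mul, ← hc]
    ring
  have hdiff : triMean1 W R y - ybar = (2 * (R : ℝ) - W)⁻¹ * ∑ j ∈ K, (y j - ybar) := by
    rw [triMean1, hc, ← hσ, ← hF, hsumF, hKsum]
    field_simp
    ring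
  -- final computation
  have hWne : (W : ℝ) ≠ 0 := Nat.cast_ne_zero.mpr hW0.ne'
  have hcoef : 3 * (1 - (R : ℝ) / W) / (1 - 2 * (1 - (R : ℝ) / W))
      = (2 * (R : ℝ) - W)⁻¹ * (3 * ((W : ℝ) - R)) := by
    have hne : 2 * (R : ℝ) - W ≠ 0 := ne_of_gt hcpos
    have h1 : 1 - 2 * (1 - (R : ℝ) / W) = (2 * R - W) / W := by field_simp; ring
    have hden : 1 - 2 * (1 - (R : ℝ) / W) ≠ 0 := by
      rw [h1]; exact div_ne_zero hne hWne
    rw [inv_mul_eq_div, div_eq_div_iff hden hne]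
    field_simp
    ring
  rw [hcoef, hdiff, abs_mul, abs_of_pos (inv_pos.mpr hcpos), mul_assoc]
  exact mul_le_mul_of_nonneg_left (by linarith [hsumK]) (le_of_lt (inv_pos.mpr hcpos))
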